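/- arXiv:1710.04821 — 3 statements merged into one kernel-verified Lean document; each statement's English description precedes it below -/
import Mathlib

section
/- Let H₀ > 0, ε ≥ 0, and let f : (0, 1/(4H₀)) → [0,∞) be a nondecreasing locally absolutely continuous function and M ≥ 0 a constant such that for almost every s ∈ (0, 1/(4H₀)), f(s) ≤ s·f'(s) + 2H₀·s·f(s) + ε·M. Then for almost every such s, the function s ↦ (1 + 4H₀ s)·f(s)/s − 2ε·M/s has nonnegative derivative, and consequently for all 0 < s < t < 1/(4H₀): (1 + 4H₀ s)·f(s)/s − 2ε·M/s ≤ (1 + 4H₀ t)·f(t)/t − 2ε·M/t. -/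
open MeasureTheory Set intervalIntegral

private lemma aux_invsq {u t : ℝ} (hu : 0 < u) (hut : u ≤ t) :
    ∫ x in u..t, (x ^ 2)⁻¹ = 1 / u - 1 / t := by
  have hder : ∀ x ∈ Set.uIcc u t, HasDerivAt (fun y => -y⁻¹) ((x ^ 2)⁻¹) x := by
    intro x hx
    rw [Set.uIcc_of_le hut] at hx
    have hx0 : x ≠ 0 := (hu.trans_le hx.1).ne'
    simpa using (hasDerivAt_inv hx0).fun_neg
  rw [intervalIntegral.integral_eq_sub_of_hasDerivAt hder]
  · have ht0 : (0:ℝ) < t := hu.trans_le hut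
    field_simp
    ring
  · apply ContinuousOn.intervalIntegrable
    apply ContinuousOn.inv₀ (continuousOn_pow 2)
    intro x hx
    rw [Set.uIcc_of_le hut] at hx
    exact (pow_pos (hu.trans_le hx.1) 2).ne'

private lemma fubini_aux (φ : ℝ → ℝ) (hφm : Measurable φ) {s t : ℝ} (h0 : 0 < s) (hst : s ≤ t)
    (hφi : IntegrableOn φ (Set.Ioc s t)) :
    ∫ x in s..t, (∫ u in s..x, φ u) / x ^ 2 = ∫ u in s..t, φ u * (1 / u - 1 / t) := by
  set μ := volume.restrict (Set.Ioc s t) with hμ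
  have hfin : IsFiniteMeasure μ := by
    constructor
    rw [hμ, Measure.restrict_apply_univ]
    exact measure_Ioc_lt_top
  set F : ℝ → ℝ → ℝ := fun x u => if u ≤ x then φ u / x ^ 2 else 0 with hF
  have hmeas : Measurable (Function.uncurry F) := by
    apply Measurable.ite (measurableSet_le measurable_snd measurable_fst)
    · exact (hφm.comp measurable_snd).div ((measurable_fst.pow_const 2))
    · exact measurable_const
  have hmem : ∀ᵐ p : ℝ × ℝ ∂(μ.prod μ), p ∈ (Set.Ioc s t) ×ˢ (Set.Ioc s t) := by
    rw [hμ, Measure.prod_restrict]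
    exact ae_restrict_mem ((measurableSet_Ioc).prod measurableSet_Ioc)
  have hdom : Integrable (fun p : ℝ × ℝ => (s ^ 2)⁻¹ * |φ p.2|) (μ.prod μ) :=
    (integrable_const _).mul_prod hφi.abs
  have hFint : Integrable (Function.uncurry F) (μ.prod μ) := by
    refine hdom.mono' hmeas.aestronglyMeasurable ?_
    filter_upwards [hmem] with p hp
    have hx : s < p.1 := hp.1.1
    have hx0 : (0:ℝ) < p.1 := h0.trans hx
    have hx2 : (0:ℝ) < p.1 ^ 2 := by positivity
    have hs2 : (0:ℝ) < s ^ 2 := by positivity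
    have huncurry : Function.uncurry F p = if p.2 ≤ p.1 then φ p.2 / p.1 ^ 2 else 0 := rfl
    rw [huncurry]
    by_cases h : p.2 ≤ p.1
    · rw [if_pos h, Real.norm_eq_abs, abs_div, abs_of_pos hx2, div_eq_mul_inv]
      have hinv : (p.1 ^ 2)⁻¹ ≤ (s ^ 2)⁻¹ := by
        apply inv_anti₀ hs2
        nlinarith
      calc |φ p.2| * (p.1 ^ 2)⁻¹ ≤ |φ p.2| * (s ^ 2)⁻¹ :=
            mul_le_mul_of_nonneg_left hinv (abs_nonneg _)
        _ = (s ^ 2)⁻¹ * |φ p.2| := mul_comm _ _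
    · rw [if_neg h, norm_zero]
      positivity
  have hswap := MeasureTheory.integral_integral_swap hFint
  have hLHS : (∫ x, ∫ u, F x u ∂μ ∂μ) = ∫ x in s..t, (∫ u in s..x, φ u) / x ^ 2 := by
    rw [intervalIntegral.integral_of_le hst]
    refine setIntegral_congr_fun measurableSet_Ioc fun x hx => ?_
    have h1 : (fun u => F x u) = (Set.Iic x).indicator (fun u => φ u / x ^ 2) := by
      ext u; simp [hF, Set.indicator_apply, Set.mem_Iic]
    rw [h1, setIntegral_indicator measurableSet_Iic, Set.Ioc_inter_Iic,
      min_eq_right hx.2, MeasureTheory.integral_div, intervalIntegral.integral_of_le hx.1.le]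
  have hRHS : (∫ u, ∫ x, F x u ∂μ ∂μ) = ∫ u in s..t, φ u * (1 / u - 1 / t) := by
    rw [intervalIntegral.integral_of_le hst]
    refine setIntegral_congr_fun measurableSet_Ioc fun u hu => ?_
    have hu0 : (0:ℝ) < u := h0.trans hu.1
    have h1 : (fun x => F x u) = (Set.Ici u).indicator (fun x => φ u / x ^ 2) := by
      ext x; simp [hF, Set.indicator_apply, Set.mem_Ici]
    have h2 : Set.Ioc s t ∩ Set.Ici u = Set.Icc u t := by
      ext x
      simp only [Set.mem_inter_iff, Set.mem_Ioc, Set.mem_Ici, Set.mem_Icc]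
      constructor
      · rintro ⟨⟨_, hxt⟩, hux⟩; exact ⟨hux, hxt⟩
      · rintro ⟨hux, hxt⟩; exact ⟨⟨hu.1.trans_le hux, hxt⟩, hux⟩
    rw [h1, setIntegral_indicator measurableSet_Ici, h2]
    rw [MeasureTheory.integral_Icc_eq_integral_Ioc, ← intervalIntegral.integral_of_le hu.2]
    have h4 : ∫ x in u..t, φ u / x ^ 2 = φ u * ∫ x in u..t, (x ^ 2)⁻¹ := by
      simp_rw [div_eq_mul_inv]
      exact intervalIntegral.integral_const_mul _ _
    rw [h4, aux_invsq hu0 hu.2]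
  rw [← hLHS, ← hRHS]
  exact hswap



/-- Let `H₀ > 0`, `ε ≥ 0`, `M ≥ 0` and let `f` be a nondecreasing, locally absolutely
continuous (encoded by the FTC hypothesis `hftc`) nonnegative function on `(0, 1/(4H₀))`
such that for a.e. `s` there, `f(s) ≤ s·f'(s) + 2H₀·s·f(s) + ε·M`.  Then for a.e. such `s`
the function `s ↦ (1+4H₀s)·f(s)/s − 2εM/s` has nonnegative derivative, and for all
`0 < s < t < 1/(4H₀)` one has
`(1+4H₀s)·f(s)/s − 2εM/s ≤ (1+4H₀t)·f(t)/t − 2εM/t`. -/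
theorem stmt_5 (H₀ ε M : ℝ) (f : ℝ → ℝ) (hH : 0 < H₀) (hε : 0 ≤ ε) (hM : 0 ≤ M)
    (hmono : MonotoneOn f (Set.Ioo 0 (1 / (4 * H₀))))
    (hnonneg : ∀ s ∈ Set.Ioo (0:ℝ) (1 / (4 * H₀)), 0 ≤ f s)
    (hftc : ∀ a b : ℝ, 0 < a → a ≤ b → b < 1 / (4 * H₀) →
      f b - f a = ∫ s in a..b, deriv f s)
    (hae : ∀ᵐ s ∂(MeasureTheory.volume.restrict (Set.Ioo (0:ℝ) (1 / (4 * H₀)))),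
      DifferentiableAt ℝ f s ∧ f s ≤ s * deriv f s + 2 * H₀ * s * f s + ε * M) :
    (∀ᵐ s ∂(MeasureTheory.volume.restrict (Set.Ioo (0:ℝ) (1 / (4 * H₀)))),
      0 ≤ deriv (fun s : ℝ => (1 + 4 * H₀ * s) * f s / s - 2 * ε * M / s) s) ∧
    ∀ s t : ℝ, 0 < s → s < t → t < 1 / (4 * H₀) →
      (1 + 4 * H₀ * s) * f s / s - 2 * ε * M / s
        ≤ (1 + 4 * H₀ * t) * f t / t - 2 * ε * M / t := by
  have hT0 : (0:ℝ) < 1 / (4 * H₀) := by positivity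
  set T : ℝ := 1 / (4 * H₀) with hT
  -- the key pointwise inequality
  have key : ∀ s ∈ Set.Ioo (0:ℝ) T, f s ≤ s * deriv f s + 2 * H₀ * s * f s + ε * M →
      f s ≤ (1 + 4 * H₀ * s) * (s * deriv f s) + 2 * (ε * M) := by
    intro s hs hineq
    have hs0 : (0:ℝ) < s := hs.1
    have h4s : 4 * H₀ * s < 1 := by
      have := hs.2
      rw [hT, lt_div_iff₀ (by positivity)] at this
      linarith
    have hf0 : 0 ≤ f s := hnonneg s hs
    have hεM : 0 ≤ ε * M := mul_nonneg hε hM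
    nlinarith [mul_nonneg hεM (sub_nonneg.2 h4s.le),
      mul_nonneg (mul_nonneg hs0.le hf0) (sub_nonneg.2 h4s.le),
      mul_le_mul_of_nonneg_left hineq (by positivity : (0:ℝ) ≤ 1 + 4 * H₀ * s),
      mul_pos hH hs0]
  -- derivative formula for g
  have hg' : ∀ s : ℝ, s ≠ 0 → DifferentiableAt ℝ f s →
      deriv (fun x : ℝ => (1 + 4 * H₀ * x) * f x / x - 2 * ε * M / x) s
        = ((1 + 4 * H₀ * s) * (s * deriv f s) + 2 * (ε * M) - f s) / s ^ 2 := by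
    intro s hs hdf
    have h1 : HasDerivAt (fun x : ℝ => 1 + 4 * H₀ * x) (4 * H₀) s := by
      simpa using ((hasDerivAt_id s).const_mul (4 * H₀)).const_add 1
    have h2 : HasDerivAt (fun x => (1 + 4 * H₀ * x) * f x)
        (4 * H₀ * f s + (1 + 4 * H₀ * s) * deriv f s) s := h1.mul hdf.hasDerivAt
    have h3 : HasDerivAt (fun x => (1 + 4 * H₀ * x) * f x / x)
        (((4 * H₀ * f s + (1 + 4 * H₀ * s) * deriv f s) * s - (1 + 4 * H₀ * s) * f s * 1) / s ^ 2)
        s := h2.div (hasDerivAt_id s) hs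
    have h4 : HasDerivAt (fun x : ℝ => 2 * ε * M / x) (2 * ε * M * (-(s ^ 2)⁻¹)) s := by
      simpa [div_eq_mul_inv] using (hasDerivAt_inv hs).const_mul (2 * ε * M)
    have h5 := (h3.fun_sub h4).deriv
    rw [h5]
    field_simp
    ring
  constructor
  · -- part 1
    filter_upwards [hae, MeasureTheory.ae_restrict_mem measurableSet_Ioo] with s hs hmem
    obtain ⟨hdf, hineq⟩ := hs
    have hs0 : (0:ℝ) < s := hmem.1
    rw [hg' s hs0.ne' hdf]
    apply div_nonneg _ (by positivity)
    have := key s hmem hineq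
    linarith
  · -- part 2
    intro s t hs hst htT
    have ht0 : (0:ℝ) < t := hs.trans hst
    have hsub : Set.Icc s t ⊆ Set.Ioo (0:ℝ) T :=
      fun x hx => ⟨hs.trans_le hx.1, lt_of_le_of_lt hx.2 htT⟩
    -- integrability of deriv f on subintervals
    have hint : ∀ a b : ℝ, 0 < a → a ≤ b → b < T →
        IntervalIntegrable (deriv f) volume a b := by
      intro a b ha hab hb
      by_contra hni
      have h0 : (∫ u in a..b, deriv f u) = 0 := intervalIntegral.integral_undef hni
      have hfab : f b = f a := by
        have := hftc a b ha hab hb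
        rw [h0] at this
        linarith
      have haI : a ∈ Set.Ioo (0:ℝ) T := ⟨ha, lt_of_le_of_lt hab hb⟩
      have hbI : b ∈ Set.Ioo (0:ℝ) T := ⟨lt_of_lt_of_le ha hab, hb⟩
      have hconst : ∀ x ∈ Set.Icc a b, f x = f a := by
        intro x hx
        have hxI : x ∈ Set.Ioo (0:ℝ) T :=
          ⟨lt_of_lt_of_le ha hx.1, lt_of_le_of_lt hx.2 hbI.2⟩
        have h1 := hmono haI hxI hx.1
        have h2 := hmono hxI hbI hx.2
        linarith [hfab]
      have hd0 : Set.EqOn (deriv f) (fun _ => (0:ℝ)) (Set.Ioo a b) := by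
        intro x hx
        have hev : f =ᶠ[nhds x] fun _ => f a := by
          filter_upwards [Ioo_mem_nhds hx.1 hx.2] with y hy
          exact hconst y (Set.Ioo_subset_Icc_self hy)
        show deriv f x = 0
        rw [hev.deriv_eq]
        exact deriv_const x _
      apply hni
      rw [intervalIntegrable_iff_integrableOn_Ioc_of_le hab]
      have hres : volume.restrict (Set.Ioc a b) = volume.restrict (Set.Ioo a b) :=
        (Measure.restrict_congr_set Ioo_ae_eq_Ioc).symm
      unfold IntegrableOn
      rw [hres]
      exact (integrableOn_congr_fun hd0 measurableSet_Ioo).2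
        (integrableOn_const measure_Ioo_lt_top.ne)
    have hItg : IntervalIntegrable (deriv f) volume s t := hint s t hs hst.le htT
    -- representation of f
    have hrep : ∀ x ∈ Set.Icc s t, f x = f s + ∫ u in s..x, deriv f u := by
      intro x hx
      have := hftc s x hs hx.1 (lt_of_le_of_lt hx.2 htT)
      linarith
    -- continuity of f on [s, t]
    have hcont : ContinuousOn f (Set.Icc s t) := by
      have h1 : ContinuousOn (fun x => f s + ∫ u in s..x, deriv f u) (Set.Icc s t) := by
        apply continuousOn_const.add
        have := intervalIntegral.continuousOn_primitive_interval'
          (a := s) (b₁ := s) (b₂ := t) hItg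
          (by rw [Set.uIcc_of_le hst.le]; exact Set.left_mem_Icc.2 hst.le)
        rwa [Set.uIcc_of_le hst.le] at this
      exact h1.congr fun x hx => hrep x hx
    -- Fubini identity
    have hswap : ∫ x in s..t, (∫ u in s..x, deriv f u) / x ^ 2
        = ∫ u in s..t, deriv f u * (1 / u - 1 / t) := by
      apply fubini_aux (deriv f) (measurable_deriv f) hs hst.le
      exact (intervalIntegrable_iff_integrableOn_Ioc_of_le hst.le).1 hItg
    -- integrability facts
    have hne : ∀ x ∈ Set.uIcc s t, x ≠ 0 := by
      intro x hx
      rw [Set.uIcc_of_le hst.le] at hx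
      exact (hs.trans_le hx.1).ne'
    have hcont2 : ContinuousOn f (Set.uIcc s t) := by
      rwa [Set.uIcc_of_le hst.le]
    have hIf' : IntervalIntegrable (fun u => deriv f u * (1 / u - 1 / t)) volume s t := by
      apply hItg.mul_continuousOn
      apply ContinuousOn.sub _ continuousOn_const
      exact continuousOn_const.div continuousOn_id hne
    have hIf'' : IntervalIntegrable (fun u => deriv f u * (1 / t + 4 * H₀)) volume s t :=
      hItg.mul_continuousOn continuousOn_const
    have hIB : IntervalIntegrable (fun u => f u / u ^ 2) volume s t := by
      apply ContinuousOn.intervalIntegrable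
      exact hcont2.div (continuousOn_pow 2) fun x hx => pow_ne_zero 2 (hne x hx)
    have hIC : IntervalIntegrable (fun u : ℝ => 2 * ε * M * (u ^ 2)⁻¹) volume s t := by
      apply ContinuousOn.intervalIntegrable
      exact continuousOn_const.mul
        ((continuousOn_pow 2).inv₀ fun x hx => pow_ne_zero 2 (hne x hx))
    -- ∫ f u / u² computation
    have hfx : ∫ x in s..t, f x / x ^ 2
        = f s * (1 / s - 1 / t) + ∫ u in s..t, deriv f u * (1 / u - 1 / t) := by
      have e1 : ∫ x in s..t, f x / x ^ 2
          = ∫ x in s..t, (f s * (x ^ 2)⁻¹ + (∫ u in s..x, deriv f u) / x ^ 2) := by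
        apply intervalIntegral.integral_congr
        intro x hx
        rw [Set.uIcc_of_le hst.le] at hx
        have hx0 : x ≠ 0 := (hs.trans_le hx.1).ne'
        show f x / x ^ 2 = f s * (x ^ 2)⁻¹ + (∫ u in s..x, deriv f u) / x ^ 2
        rw [hrep x hx]
        field_simp
      have hIa : IntervalIntegrable (fun x : ℝ => f s * (x ^ 2)⁻¹) volume s t := by
        apply ContinuousOn.intervalIntegrable
        exact continuousOn_const.mul
          ((continuousOn_pow 2).inv₀ fun x hx => pow_ne_zero 2 (hne x hx))
      have hIb : IntervalIntegrable (fun x => (∫ u in s..x, deriv f u) / x ^ 2) volume s t := by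
        apply ContinuousOn.intervalIntegrable
        apply ContinuousOn.div
        · have := intervalIntegral.continuousOn_primitive_interval'
            (a := s) (b₁ := s) (b₂ := t) hItg
            (by rw [Set.uIcc_of_le hst.le]; exact Set.left_mem_Icc.2 hst.le)
          exact this
        · exact continuousOn_pow 2
        · exact fun x hx => pow_ne_zero 2 (hne x hx)
      rw [e1, intervalIntegral.integral_add hIa hIb, hswap,
        intervalIntegral.integral_const_mul, aux_invsq hs hst.le]
    -- the nonnegative integral
    have hK0 : 0 ≤ ∫ u in s..t,
        (deriv f u * (1 / u + 4 * H₀) - f u / u ^ 2 + 2 * ε * M * (u ^ 2)⁻¹) := by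
      apply intervalIntegral.integral_nonneg_of_ae_restrict hst.le
      have hae' : ∀ᵐ u ∂(volume.restrict (Set.Icc s t)),
          DifferentiableAt ℝ f u ∧ f u ≤ u * deriv f u + 2 * H₀ * u * f u + ε * M :=
        ae_restrict_of_ae_restrict_of_subset hsub hae
      filter_upwards [hae', MeasureTheory.ae_restrict_mem measurableSet_Icc] with u hu hmem
      have huI : u ∈ Set.Ioo (0:ℝ) T := hsub hmem
      have hu0 : (0:ℝ) < u := huI.1
      have hkey := key u huI hu.2
      have heq : deriv f u * (1 / u + 4 * H₀) - f u / u ^ 2 + 2 * ε * M * (u ^ 2)⁻¹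
          = ((1 + 4 * H₀ * u) * (u * deriv f u) + 2 * (ε * M) - f u) / u ^ 2 := by
        field_simp
        ring
      rw [heq]
      apply div_nonneg _ (by positivity)
      linarith
    -- split the integral
    have hsplit : (∫ u in s..t,
          (deriv f u * (1 / u + 4 * H₀) - f u / u ^ 2 + 2 * ε * M * (u ^ 2)⁻¹))
        = (∫ u in s..t, deriv f u * (1 / u - 1 / t))
          + (∫ u in s..t, deriv f u) * (1 / t + 4 * H₀)
          - (∫ u in s..t, f u / u ^ 2) + 2 * ε * M * (1 / s - 1 / t) := by
      have e2 : ∀ u : ℝ, deriv f u * (1 / u + 4 * H₀) - f u / u ^ 2 + 2 * ε * M * (u ^ 2)⁻¹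
          = (deriv f u * (1 / u - 1 / t) + deriv f u * (1 / t + 4 * H₀))
            - f u / u ^ 2 + 2 * ε * M * (u ^ 2)⁻¹ := by
        intro u; ring
      simp_rw [e2]
      rw [intervalIntegral.integral_add (((hIf'.add hIf'').sub hIB)) hIC,
        intervalIntegral.integral_sub (hIf'.add hIf'') hIB,
        intervalIntegral.integral_add hIf' hIf'',
        intervalIntegral.integral_mul_const, intervalIntegral.integral_const_mul,
        aux_invsq hs hst.le]
    -- conclude
    have hI := hftc s t hs hst.le htT
    rw [hsplit, hfx] at hK0
    have hft : f t = f s + ∫ u in s..t, deriv f u := by linarith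
    have halg : (1 + 4 * H₀ * t) * f t / t - 2 * ε * M / t
        - ((1 + 4 * H₀ * s) * f s / s - 2 * ε * M / s)
        = (∫ u in s..t, deriv f u) * (1 / t + 4 * H₀)
          - f s * (1 / s - 1 / t) + 2 * ε * M * (1 / s - 1 / t) := by
      rw [hft]
      field_simp
      ring
    linarith
end

section
/- Let X ⊂ ℝ^(n+1) be a nonempty compact set and σ : X → Sⁿ a continuous map with σ(y) ∈ N_y X for all y ∈ X. For α ∈ (0, π/2) define N^α X/σ = ⋃_{y∈X} { ν ∈ N_y X : σ(y)·ν ≥ sin α }. Then N^α X/σ is a closed subset of Sⁿ. -/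
/-- Let `X ⊂ ℝ^(n+1)` be a nonempty compact set and `σ` a continuous map on `X` with
`σ(y) ∈ N_y X` for all `y ∈ X`.  For `α ∈ (0, π/2)`, the restricted normal set
`N^α X/σ = ⋃_{y∈X} {ν ∈ N_y X : σ(y)·ν ≥ sin α}` is a closed subset of `Sⁿ`. -/
theorem stmt_10 (n : ℕ) (X : Set (EuclideanSpace ℝ (Fin (n+1))))
    (hne : X.Nonempty) (hcp : IsCompact X)
    (σ : EuclideanSpace ℝ (Fin (n+1)) → EuclideanSpace ℝ (Fin (n+1)))
    (hσc : ContinuousOn σ X)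
    (hσ : ∀ y ∈ X, σ y ∈ Metric.sphere (0 : EuclideanSpace ℝ (Fin (n+1))) 1 ∧
      ∀ x ∈ X, (inner ℝ (σ y) (x - y) : ℝ) ≤ 0)
    (α : ℝ) (hα : α ∈ Set.Ioo 0 (Real.pi / 2)) :
    IsClosed (⋃ y ∈ X, {ν : EuclideanSpace ℝ (Fin (n+1)) |
      ν ∈ Metric.sphere (0 : EuclideanSpace ℝ (Fin (n+1))) 1 ∧
      (∀ x ∈ X, (inner ℝ ν (x - y) : ℝ) ≤ 0) ∧
      Real.sin α ≤ (inner ℝ (σ y) ν : ℝ)}) := by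
  apply IsSeqClosed.isClosed
  intro u ν hu hν
  -- choose witnesses
  have H : ∀ i, ∃ z ∈ X, u i ∈ Metric.sphere (0 : EuclideanSpace ℝ (Fin (n+1))) 1 ∧
      (∀ x ∈ X, (inner ℝ (u i) (x - z) : ℝ) ≤ 0) ∧ Real.sin α ≤ (inner ℝ (σ z) (u i) : ℝ) := by
    intro i
    have := hu i
    simp only [Set.mem_iUnion, Set.mem_setOf_eq] at this
    obtain ⟨z, hz, a, b, c⟩ := this
    exact ⟨z, hz, a, b, c⟩
  choose y hyX h1 h2 h3 using H
  obtain ⟨y₀, hy₀X, φ, hφ, hyconv⟩ := hcp.isSeqCompact hyX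
  have huφ : Filter.Tendsto (u ∘ φ) Filter.atTop (nhds ν) :=
    hν.comp hφ.tendsto_atTop
  simp only [Set.mem_iUnion, Set.mem_setOf_eq]
  refine ⟨y₀, hy₀X, ?_, ?_, ?_⟩
  · have : Filter.Tendsto (fun i => ‖u (φ i)‖) Filter.atTop (nhds ‖ν‖) :=
      (continuous_norm.tendsto ν).comp huφ
    have heq : (fun i => ‖u (φ i)‖) = fun _ => (1 : ℝ) := by
      funext i
      simpa [Metric.mem_sphere, dist_eq_norm] using h1 (φ i)
    rw [heq] at this
    have : ‖ν‖ = 1 := tendsto_nhds_unique this tendsto_const_nhds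
    simpa [Metric.mem_sphere, dist_eq_norm]
  · intro x hx
    have hconv : Filter.Tendsto (fun i => (inner ℝ (u (φ i)) (x - y (φ i)) : ℝ))
        Filter.atTop (nhds (inner ℝ ν (x - y₀) : ℝ)) := by
      exact Filter.Tendsto.inner huφ (tendsto_const_nhds.sub hyconv)
    exact le_of_tendsto hconv (Filter.Eventually.of_forall fun i => h2 (φ i) x hx)
  · have hσconv : Filter.Tendsto (fun i => σ (y (φ i))) Filter.atTop (nhds (σ y₀)) := by
      apply (hσc y₀ hy₀X).tendsto.comp
      exact tendsto_nhdsWithin_iff.mpr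
        ⟨hyconv, Filter.Eventually.of_forall fun i => hyX (φ i)⟩
    have hconv : Filter.Tendsto (fun i => (inner ℝ (σ (y (φ i))) (u (φ i)) : ℝ))
        Filter.atTop (nhds (inner ℝ (σ y₀) ν : ℝ)) := Filter.Tendsto.inner hσconv huφ
    exact ge_of_tendsto hconv (Filter.Eventually.of_forall fun i => h3 (φ i))
end

section
/- Let X ⊂ ℝ^(n+1) be a nonempty compact set and σ : X → Sⁿ a continuous map with σ(y) ∈ N_y X for all y. Then the restricted normal cone NX/σ = ⋃_{y∈X}{ ν ∈ N_y X : σ(y)·ν > 0 } satisfies Hⁿ(NX/σ) ≥ (1/2)·Hⁿ(Sⁿ). -/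
open MeasureTheory Metric Set Filter Topology
open scoped NNReal ENNReal RealInnerProductSpace


section helpers

variable {E : Type*} [NormedAddCommGroup E] [InnerProductSpace ℝ E]

/-- Normalization map is 2-Lipschitz on the set of vectors of norm at least 1. -/
lemma lipschitzOnWith_normalize :
    LipschitzOnWith 2 (fun x : E => ‖x‖⁻¹ • x) {x : E | 1 ≤ ‖x‖} := by
  apply LipschitzOnWith.of_dist_le_mul
  intro x hx y hy
  simp only [Set.mem_setOf_eq] at hx hy
  have hx0 : (0:ℝ) < ‖x‖ := lt_of_lt_of_le one_pos hx
  have hy0 : (0:ℝ) < ‖y‖ := lt_of_lt_of_le one_pos hy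
  rw [dist_eq_norm, dist_eq_norm]
  have key : ‖x‖⁻¹ • x - ‖y‖⁻¹ • y
      = ‖x‖⁻¹ • (x - y) + (‖x‖⁻¹ - ‖y‖⁻¹) • y := by
    rw [smul_sub, sub_smul]; abel
  rw [key]
  have h1 : ‖‖x‖⁻¹ • (x - y)‖ ≤ ‖x - y‖ := by
    rw [norm_smul, norm_inv, norm_norm]
    calc ‖x‖⁻¹ * ‖x - y‖ ≤ 1 * ‖x - y‖ := by
          gcongr; exact inv_le_one_of_one_le₀ hx
      _ = ‖x - y‖ := one_mul _
  have h2 : ‖(‖x‖⁻¹ - ‖y‖⁻¹) • y‖ ≤ ‖x - y‖ := by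
    rw [norm_smul, Real.norm_eq_abs]
    have heq : |‖x‖⁻¹ - ‖y‖⁻¹| = |‖y‖ - ‖x‖| / (‖x‖ * ‖y‖) := by
      rw [inv_sub_inv (ne_of_gt hx0) (ne_of_gt hy0), abs_div,
        abs_of_pos (mul_pos hx0 hy0)]
    rw [heq]
    have hnn : |‖y‖ - ‖x‖| ≤ ‖x - y‖ := by
      rw [abs_sub_comm]; exact abs_norm_sub_norm_le x y
    have hstep : |‖y‖ - ‖x‖| / (‖x‖ * ‖y‖) * ‖y‖ = |‖y‖ - ‖x‖| / ‖x‖ := by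
      field_simp
    rw [hstep]
    calc |‖y‖ - ‖x‖| / ‖x‖ ≤ ‖x - y‖ / 1 := by gcongr
      _ = ‖x - y‖ := div_one _
  calc ‖‖x‖⁻¹ • (x - y) + (‖x‖⁻¹ - ‖y‖⁻¹) • y‖
      ≤ ‖‖x‖⁻¹ • (x - y)‖ + ‖(‖x‖⁻¹ - ‖y‖⁻¹) • y‖ := norm_add_le _ _
    _ ≤ ‖x - y‖ + ‖x - y‖ := add_le_add h1 h2
    _ = (2:ℝ≥0) * ‖x - y‖ := by push_cast; ring

/-- Reflection across the hyperplane orthogonal to a unit vector is an isometry. -/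
lemma isometry_reflect (u : E) (hu : ‖u‖ = 1) :
    Isometry (fun v : E => v - (2 * ⟪u, v⟫) • u) := by
  apply Isometry.of_dist_eq
  intro x y
  rw [dist_eq_norm, dist_eq_norm]
  have key : (x - (2 * ⟪u, x⟫) • u) - (y - (2 * ⟪u, y⟫) • u)
      = (x - y) - (2 * ⟪u, x - y⟫) • u := by
    rw [inner_sub_right, mul_sub, sub_smul]; abel
  rw [key]
  have h2 : ‖(x - y) - (2 * ⟪u, x - y⟫) • u‖^2 = ‖x - y‖^2 := by
    rw [norm_sub_sq_real, real_inner_smul_right, norm_smul, hu, Real.norm_eq_abs,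
      real_inner_comm (x - y) u, mul_one, sq_abs]
    ring
  have h3 := congrArg Real.sqrt h2
  rwa [Real.sqrt_sq (norm_nonneg _), Real.sqrt_sq (norm_nonneg _)] at h3

end helpers


lemma hausdorff_le_pi_volume (m : ℕ) (s : Set (EuclideanSpace ℝ (Fin m))) :
    μH[(m:ℝ)] s ≤ ((((Fintype.card (Fin m) : ℝ≥0) ^ (((1:ℝ≥0∞)/2).toReal) : ℝ≥0)) : ℝ≥0∞) ^ (m:ℝ)
      * volume ((WithLp.equiv 2 (Fin m → ℝ)) '' s) := by
  classical
  set e := WithLp.equiv 2 (Fin m → ℝ)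
  have hlip : LipschitzWith _ (e.symm : (Fin m → ℝ) → EuclideanSpace ℝ (Fin m)) :=
    (PiLp.antilipschitzWith_ofLp 2 (fun _ : Fin m => ℝ)).to_rightInverse e.right_inv
  have hs : s = e.symm '' (e '' s) := by
    rw [Set.image_image]; simp
  calc μH[(m:ℝ)] s = μH[(m:ℝ)] (e.symm '' (e '' s)) := by rw [← hs]
    _ ≤ _ * μH[(m:ℝ)] (e '' s) :=
        (LipschitzWith.lipschitzOnWith (s := e '' s) hlip).hausdorffMeasure_image_le (by positivity)
    _ = _ * volume (e '' s) := by
        rw [show ((m:ℝ)) = ((Fintype.card (Fin m) : ℕ) : ℝ) by simp,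
          MeasureTheory.hausdorffMeasure_pi_real]

lemma volume_pi_image_eq (m : ℕ) (s : Set (EuclideanSpace ℝ (Fin m))) (hs : MeasurableSet s) :
    volume ((WithLp.equiv 2 (Fin m → ℝ)) '' s) = volume s := by
  have hco : ((WithLp.equiv 2 (Fin m → ℝ)) '' s)
      = (MeasurableEquiv.toLp 2 (Fin m → ℝ)).symm.symm ⁻¹' s := by
    rw [← MeasurableEquiv.image_eq_preimage_symm]
    rfl
  rw [hco, MeasurePreserving.measure_preimage
    (EuclideanSpace.volume_preserving_symm_measurableEquiv_toLp (Fin m)).symm hs.nullMeasurableSet]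

lemma hausdorff_closedBall_lt_top (m : ℕ) (R : ℝ) :
    μH[(m:ℝ)] (Metric.closedBall (0 : EuclideanSpace ℝ (Fin m)) R) < ⊤ := by
  refine lt_of_le_of_lt (hausdorff_le_pi_volume m _) ?_
  apply ENNReal.mul_lt_top
  · exact ENNReal.rpow_lt_top_of_nonneg (by positivity) (by simp)
  · refine lt_of_le_of_lt (measure_mono ?_) ((isCompact_closedBall (0 : Fin m → ℝ) R).measure_lt_top)
    intro x hx
    obtain ⟨y, hy, rfl⟩ := hx
    have h1 : dist ((WithLp.equiv 2 (Fin m → ℝ)) y) ((WithLp.equiv 2 (Fin m → ℝ)) 0)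
        ≤ 1 * dist y (0 : EuclideanSpace ℝ (Fin m)) :=
      (PiLp.lipschitzWith_ofLp 2 (fun _ : Fin m => ℝ)).dist_le_mul y 0
    simp only [one_mul] at h1
    have : ((WithLp.equiv 2 (Fin m → ℝ)) 0) = 0 := rfl
    rw [this] at h1
    exact Metric.mem_closedBall.mpr (le_trans h1 (Metric.mem_closedBall.mp hy))

lemma hausdorff_sphere_self_null (m : ℕ) :
    μH[(m:ℝ)] (Metric.sphere (0 : EuclideanSpace ℝ (Fin m)) 1) = 0 := by
  rcases Nat.eq_zero_or_pos m with hm | hm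
  · subst hm
    have h : Metric.sphere (0 : EuclideanSpace ℝ (Fin 0)) 1 = ∅ := by
      ext x
      simp only [Metric.mem_sphere, Set.mem_empty_iff_false, iff_false]
      have : x = 0 := Subsingleton.elim x 0
      simp [this]
    simp [h]
  · have hnt : Nontrivial (EuclideanSpace ℝ (Fin m)) := by
      refine ⟨EuclideanSpace.single (⟨0, hm⟩ : Fin m) (1:ℝ), 0, fun h => ?_⟩
      have := congrFun (congrArg (fun (z : EuclideanSpace ℝ (Fin m)) (i : Fin m) => z i) h) ⟨0, hm⟩
      simp [EuclideanSpace.single_apply] at this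
    refine le_antisymm ?_ zero_le
    refine le_trans (hausdorff_le_pi_volume m _) ?_
    rw [volume_pi_image_eq m _ isClosed_sphere.measurableSet]
    rw [MeasureTheory.Measure.addHaar_sphere volume 0 1]
    simp


/-- A hyperplane section of the unit sphere in `ℝ^{n+1}` is `Hⁿ`-null. -/
lemma hyperplane_section_null (n : ℕ) (w : EuclideanSpace ℝ (Fin (n+1))) (hw : w ≠ 0) :
    μH[(n:ℝ)] {ν : EuclideanSpace ℝ (Fin (n+1)) | ‖ν‖ = 1 ∧ ⟪w, ν⟫ = 0} = 0 := by
  classical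
  have hfact : Fact (Module.finrank ℝ (EuclideanSpace ℝ (Fin (n+1))) = n + 1) := ⟨finrank_euclideanSpace_fin⟩
  set K : Submodule ℝ (EuclideanSpace ℝ (Fin (n+1))) := (Submodule.span ℝ {w})ᗮ with hK
  have hrank : Module.finrank ℝ K = n := Submodule.finrank_orthogonal_span_singleton hw
  have : FiniteDimensional ℝ K := inferInstance
  let b : OrthonormalBasis (Fin n) ℝ K :=
    (stdOrthonormalBasis ℝ K).reindex (finCongr hrank)
  let L : EuclideanSpace ℝ (Fin n) ≃ₗᵢ[ℝ] K := b.repr.symm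
  let f : EuclideanSpace ℝ (Fin n) → EuclideanSpace ℝ (Fin (n+1)) := fun x => (L x : EuclideanSpace ℝ (Fin (n+1)))
  have hf : Isometry f := (isometry_subtype_coe).comp L.isometry
  have hsub : {ν : EuclideanSpace ℝ (Fin (n+1)) | ‖ν‖ = 1 ∧ ⟪w, ν⟫ = 0}
      ⊆ f '' (Metric.sphere (0 : EuclideanSpace ℝ (Fin n)) 1) := by
    rintro ν ⟨hν1, hν2⟩
    have hνK : ν ∈ K := by
      rw [hK]
      exact Submodule.mem_orthogonal_singleton_iff_inner_right.mpr hν2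
    refine ⟨L.symm ⟨ν, hνK⟩, ?_, ?_⟩
    · rw [Metric.mem_sphere, dist_zero_right, L.symm.norm_map]
      exact hν1
    · show (L (L.symm ⟨ν, hνK⟩) : EuclideanSpace ℝ (Fin (n+1))) = ν
      rw [L.apply_symm_apply]
  refine le_antisymm (le_trans (measure_mono hsub) ?_) zero_le
  rw [hf.hausdorffMeasure_image (Or.inl (by positivity))]
  exact le_of_eq (hausdorff_sphere_self_null n)


namespace SphFin

variable (n : ℕ)

/-- Insertion of a fixed coordinate as a map between Euclidean spaces. -/
noncomputable def ins (i : Fin (n+1)) (c : ℝ) (x : EuclideanSpace ℝ (Fin n)) :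
    EuclideanSpace ℝ (Fin (n+1)) :=
  (WithLp.equiv 2 (Fin (n+1) → ℝ)).symm (i.insertNth c ((WithLp.equiv 2 (Fin n → ℝ)) x))

lemma ins_apply_same (i : Fin (n+1)) (c : ℝ) (x : EuclideanSpace ℝ (Fin n)) :
    ins n i c x i = c :=
  Fin.insertNth_apply_same (α := fun _ => ℝ) i c _

lemma ins_apply_succAbove (i : Fin (n+1)) (c : ℝ) (x : EuclideanSpace ℝ (Fin n)) (j : Fin n) :
    ins n i c x (i.succAbove j) = x j :=
  Fin.insertNth_apply_succAbove (α := fun _ => ℝ) i c _ j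

lemma isometry_ins (i : Fin (n+1)) (c : ℝ) : Isometry (ins n i c) := by
  apply Isometry.of_dist_eq
  intro x y
  rw [EuclideanSpace.dist_eq, EuclideanSpace.dist_eq]
  congr 1
  rw [Fin.sum_univ_succAbove (fun j => dist (ins n i c x j) (ins n i c y j) ^ 2) i]
  simp only [ins_apply_same, ins_apply_succAbove]
  simp

lemma norm_ins_ge (i : Fin (n+1)) (c : ℝ) (hc : |c| = 1) (x : EuclideanSpace ℝ (Fin n)) :
    1 ≤ ‖ins n i c x‖ := by
  have h1 : |ins n i c x i| ≤ ‖ins n i c x‖ := by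
    rw [EuclideanSpace.norm_eq]
    rw [show |ins n i c x i| = Real.sqrt (ins n i c x i ^ 2) by rw [Real.sqrt_sq_eq_abs]]
    apply Real.sqrt_le_sqrt
    refine le_trans (le_of_eq ?_) (Finset.single_le_sum (f := fun j => ‖ins n i c x j‖ ^ 2)
      (fun j _ => sq_nonneg _) (Finset.mem_univ i))
    show ins n i c x i ^ 2 = ‖ins n i c x i‖ ^ 2
    rw [Real.norm_eq_abs, sq_abs]
  rwa [ins_apply_same, hc] at h1

end SphFin

/-- The unit sphere in `ℝ^{n+1}` has finite `Hⁿ` measure. -/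
lemma sphere_hausdorff_lt_top (n : ℕ) :
    μH[(n:ℝ)] (Metric.sphere (0 : EuclideanSpace ℝ (Fin (n+1))) 1) < ⊤ := by
  classical
  set f : Fin (n+1) → ℝ → EuclideanSpace ℝ (Fin n) → EuclideanSpace ℝ (Fin (n+1)) :=
    fun i c x => ‖SphFin.ins n i c x‖⁻¹ • SphFin.ins n i c x with hf
  have hcover : Metric.sphere (0 : EuclideanSpace ℝ (Fin (n+1))) 1 ⊆
      ⋃ i : Fin (n+1), ⋃ c ∈ ({1, -1} : Finset ℝ),
        f i c '' (Metric.closedBall 0 (Real.sqrt n)) := by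
    intro ν hν
    have hν1 : ‖ν‖ = 1 := by rwa [Metric.mem_sphere, dist_zero_right] at hν
    obtain ⟨i, -, hi⟩ := Finset.exists_max_image Finset.univ (fun j => |ν j|)
      ⟨⟨0, Nat.succ_pos n⟩, Finset.mem_univ _⟩
    have hipos : 0 < |ν i| := by
      by_contra h
      push_neg at h
      have hz : ∀ j, ν j = 0 := fun j =>
        abs_nonpos_iff.mp (le_trans (hi j (Finset.mem_univ j)) h)
      have : ν = 0 := PiLp.ext hz
      rw [this] at hν1; simp at hν1
    have hne : ν i ≠ 0 := fun h => by rw [h] at hipos; simp at hipos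
    set c : ℝ := if 0 < ν i then 1 else -1 with hc
    have hcabs : |c| = 1 := by rw [hc]; split_ifs <;> simp
    have hcval : c = ν i / |ν i| := by
      rcases lt_trichotomy (ν i) 0 with h | h | h
      · rw [hc, if_neg (by linarith), abs_of_neg h, div_neg, div_self hne]
      · exact absurd h hne
      · rw [hc, if_pos h, abs_of_pos h, div_self hne]
    set x : EuclideanSpace ℝ (Fin n) :=
      (WithLp.equiv 2 (Fin n → ℝ)).symm (fun j => ν (i.succAbove j) / |ν i|) with hx
    have hins : SphFin.ins n i c x = |ν i|⁻¹ • ν := by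
      ext j
      by_cases hj : j = i
      · rw [hj, SphFin.ins_apply_same, hcval]
        show ν i / |ν i| = |ν i|⁻¹ * ν i
        rw [div_eq_inv_mul]
      · obtain ⟨k, rfl⟩ := Fin.exists_succAbove_eq hj
        rw [SphFin.ins_apply_succAbove]
        show ν (i.succAbove k) / |ν i| = |ν i|⁻¹ * ν (i.succAbove k)
        rw [div_eq_inv_mul]
    have hxball : x ∈ Metric.closedBall (0 : EuclideanSpace ℝ (Fin n)) (Real.sqrt n) := by
      rw [Metric.mem_closedBall, dist_zero_right, EuclideanSpace.norm_eq]
      apply Real.sqrt_le_sqrt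
      have hterm : ∀ j : Fin n, ‖x j‖ ^ 2 ≤ 1 := by
        intro j
        have h1 : ‖x j‖ = |ν (i.succAbove j)| / |ν i| := by
          show ‖ν (i.succAbove j) / |ν i|‖ = |ν (i.succAbove j)| / |ν i|
          simp [Real.norm_eq_abs, abs_div]
        have h2 : ‖x j‖ ≤ 1 := by
          rw [h1, div_le_one hipos]
          exact hi (i.succAbove j) (Finset.mem_univ _)
        calc ‖x j‖ ^ 2 ≤ 1 ^ 2 := pow_le_pow_left₀ (norm_nonneg _) h2 2
          _ = 1 := one_pow 2
      calc ∑ j : Fin n, ‖x j‖ ^ 2 ≤ ∑ _j : Fin n, (1:ℝ) :=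
            Finset.sum_le_sum (fun j _ => hterm j)
        _ = n := by simp
    have hfx : f i c x = ν := by
      rw [hf]
      show ‖SphFin.ins n i c x‖⁻¹ • SphFin.ins n i c x = ν
      rw [hins, norm_smul, Real.norm_eq_abs, abs_inv, abs_abs, hν1, mul_one, inv_inv,
        smul_smul, mul_inv_cancel₀ (by exact ne_of_gt hipos), one_smul]
    refine Set.mem_iUnion.mpr ⟨i, Set.mem_iUnion₂.mpr ⟨c, ?_, ⟨x, hxball, hfx⟩⟩⟩
    rw [hc]; split_ifs <;> simp
  refine lt_of_le_of_lt (measure_mono hcover) ?_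
  refine lt_of_le_of_lt (measure_iUnion_fintype_le _ _) ?_
  rw [ENNReal.sum_lt_top]
  intro i _
  refine lt_of_le_of_lt (measure_biUnion_finset_le _ _) ?_
  rw [ENNReal.sum_lt_top]
  intro c hc
  have hcabs : |c| = 1 := by
    simp only [Finset.mem_insert, Finset.mem_singleton] at hc
    rcases hc with rfl | rfl <;> simp
  have hlip : LipschitzOnWith (2 * 1) (f i c) (Metric.closedBall 0 (Real.sqrt n)) := by
    have h2 : MapsTo (SphFin.ins n i c) (Metric.closedBall 0 (Real.sqrt n))
        {v : EuclideanSpace ℝ (Fin (n+1)) | 1 ≤ ‖v‖} :=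
      fun x _ => SphFin.norm_ins_ge n i c hcabs x
    exact lipschitzOnWith_normalize.comp
      (((SphFin.isometry_ins n i c).lipschitz).lipschitzOnWith) h2
  refine lt_of_le_of_lt (hlip.hausdorffMeasure_image_le (by positivity)) ?_
  apply ENNReal.mul_lt_top
  · exact ENNReal.rpow_lt_top_of_nonneg (by positivity) (by simp)
  · exact hausdorff_closedBall_lt_top n (Real.sqrt n)


section cone

variable {n : ℕ}

local notation "E'" => EuclideanSpace ℝ (Fin (n+1))

set_option maxHeartbeats 2000000 in
/-- Core reflection/perturbation estimate for a single normal cone. -/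
lemma cone_measure_le (u : E') (hu : ‖u‖ = 1) (F : Finset E') (y : E')
    (hcu : ∀ x ∈ F, ⟪u, x - y⟫ ≤ 0) (δ : ℝ) (hδ0 : 0 < δ) (hδ1 : δ ≤ 1/2) :
    μH[(n:ℝ)] {ν : E' | ‖ν‖ = 1 ∧ ∀ x ∈ F, ⟪ν, x - y⟫ ≤ 0}
      ≤ 2 * ((Real.toNNReal (1+3*δ) : ℝ≥0∞) ^ (n:ℝ))
        * μH[(n:ℝ)] {ν : E' | ‖ν‖ = 1 ∧ (∀ x ∈ F, ⟪ν, x - y⟫ ≤ 0) ∧ δ/(1+δ) ≤ ⟪u, ν⟫} := by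
  classical
  set C : Set E' := {ν : E' | ‖ν‖ = 1 ∧ ∀ x ∈ F, ⟪ν, x - y⟫ ≤ 0} with hC
  set P : Set E' := {ν : E' | ‖ν‖ = 1 ∧ (∀ x ∈ F, ⟪ν, x - y⟫ ≤ 0) ∧ δ/(1+δ) ≤ ⟪u, ν⟫} with hP
  set Cp : Set E' := C ∩ {ν | 0 ≤ ⟪u, ν⟫} with hCp
  set Cm : Set E' := C ∩ {ν | ⟪u, ν⟫ ≤ 0} with hCm
  set ψ : E' → E' := fun w => ‖w + δ • u‖⁻¹ • (w + δ • u) with hψ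
  set g : E' → E' := fun v =>
    (δ * ⟪u, v⟫ + Real.sqrt (1 - δ^2 + δ^2 * ⟪u, v⟫^2)) • v - δ • u with hg
  set rf : E' → E' := fun v => v - (2 * ⟪u, v⟫) • u with hrf
  have huu : ⟪u, u⟫ = (1:ℝ) := by
    rw [real_inner_self_eq_norm_sq, hu]; norm_num
  -- basic: |⟪u,v⟫| ≤ 1 for unit v
  have habs : ∀ v : E', ‖v‖ = 1 → |⟪u, v⟫| ≤ 1 := by
    intro v hv
    calc |⟪u, v⟫| ≤ ‖u‖ * ‖v‖ := abs_real_inner_le_norm u v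
      _ = 1 := by rw [hu, hv, mul_one]
  -- norm of w + δ u
  have hρsq : ∀ w : E', ‖w‖ = 1 → ‖w + δ • u‖^2 = 1 + 2*δ*⟪u, w⟫ + δ^2 := by
    intro w hw
    rw [norm_add_sq_real, real_inner_smul_right, norm_smul, Real.norm_eq_abs,
      abs_of_pos hδ0, hu, hw, real_inner_comm w u]
    ring
  have hρ_ge : ∀ w : E', ‖w‖ = 1 → 0 ≤ ⟪u, w⟫ → 1 ≤ ‖w + δ • u‖ := by
    intro w hw hs
    nlinarith [hρsq w hw, norm_nonneg (w + δ • u)]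
  have hρ_le : ∀ w : E', ‖w‖ = 1 → ‖w + δ • u‖ ≤ 1 + δ := by
    intro w hw
    have h1 : ⟪u, w⟫ ≤ 1 := le_trans (le_abs_self _) (habs w hw)
    nlinarith [hρsq w hw, norm_nonneg (w + δ • u)]
  -- inner product with ψ w
  have hinner_ψ : ∀ w : E', ⟪u, ψ w⟫ = ‖w + δ • u‖⁻¹ * (⟪u, w⟫ + δ) := by
    intro w
    rw [hψ]
    show ⟪u, ‖w + δ • u‖⁻¹ • (w + δ • u)⟫ = _
    rw [real_inner_smul_right, inner_add_right, real_inner_smul_right, huu, mul_one]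
  -- ψ w recovers w via g, for unit w with nonneg inner
  have hg_ψ : ∀ w : E', ‖w‖ = 1 → 0 ≤ ⟪u, w⟫ → g (ψ w) = w := by
    intro w hw hs
    set s : ℝ := ⟪u, w⟫ with hsdef
    set ρ : ℝ := ‖w + δ • u‖ with hρdef
    have hρ1 : 1 ≤ ρ := hρ_ge w hw hs
    have hρpos : (0:ℝ) < ρ := lt_of_lt_of_le one_pos hρ1
    have hρne : ρ ≠ 0 := ne_of_gt hρpos
    have hρ2 : ρ^2 = 1 + 2*δ*s + δ^2 := hρsq w hw
    have ht : ⟪u, ψ w⟫ = ρ⁻¹ * (s + δ) := hinner_ψ w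
    have hsqrt : Real.sqrt (1 - δ^2 + δ^2 * ⟪u, ψ w⟫^2) = (1 + δ*s)/ρ := by
      have harg : 1 - δ^2 + δ^2 * ⟪u, ψ w⟫^2 = ((1 + δ*s)/ρ)^2 := by
        rw [ht]
        field_simp
        nlinarith [hρ2]
      rw [harg, Real.sqrt_sq (by positivity)]
    have hcoef : δ * ⟪u, ψ w⟫ + Real.sqrt (1 - δ^2 + δ^2 * ⟪u, ψ w⟫^2) = ρ := by
      rw [hsqrt, ht]
      field_simp
      nlinarith [hρ2]
    rw [hg]
    show (δ * ⟪u, ψ w⟫ + Real.sqrt (1 - δ^2 + δ^2 * ⟪u, ψ w⟫^2)) • ψ w - δ • u = w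
    rw [hcoef, hψ]
    show ρ • (ρ⁻¹ • (w + δ • u)) - δ • u = w
    rw [smul_smul, mul_inv_cancel₀ hρne, one_smul]
    abel
  -- Lipschitz bound for g on unit vectors with nonneg inner
  have hg_lip : LipschitzOnWith (Real.toNNReal (1+3*δ)) g {v : E' | ‖v‖ = 1 ∧ 0 ≤ ⟪u, v⟫} := by
    apply LipschitzOnWith.of_dist_le_mul
    rintro v ⟨hv1, hv2⟩ v' ⟨hv'1, hv'2⟩
    set t : ℝ := ⟪u, v⟫
    set t' : ℝ := ⟪u, v'⟫
    have ht1 : t ≤ 1 := le_trans (le_abs_self _) (habs v hv1)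
    have ht'1 : t' ≤ 1 := le_trans (le_abs_self _) (habs v' hv'1)
    have htd : |t - t'| ≤ dist v v' := by
      rw [dist_eq_norm]
      calc |t - t'| = |⟪u, v - v'⟫| := by rw [inner_sub_right]
        _ ≤ ‖u‖ * ‖v - v'‖ := abs_real_inner_le_norm _ _
        _ = ‖v - v'‖ := by rw [hu, one_mul]
    have htd' : |t - t'| ≤ ‖v - v'‖ := by rw [dist_eq_norm] at htd; exact htd
    set a : ℝ := 1 - δ^2 + δ^2 * t^2 with hadef
    set a' : ℝ := 1 - δ^2 + δ^2 * t'^2 with ha'def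
    have hδ2 : δ^2 ≤ 1/4 := by nlinarith
    have hquarter : (1/2:ℝ) = Real.sqrt (1/4) := by
      rw [show (1/4:ℝ) = (1/2)^2 by norm_num, Real.sqrt_sq (by norm_num)]
    have ha14 : (1/4:ℝ) ≤ a := by rw [hadef]; nlinarith [sq_nonneg (δ*t)]
    have ha'14 : (1/4:ℝ) ≤ a' := by rw [ha'def]; nlinarith [sq_nonneg (δ*t')]
    have ha : (1/2:ℝ) ≤ Real.sqrt a := by rw [hquarter]; exact Real.sqrt_le_sqrt ha14
    have ha' : (1/2:ℝ) ≤ Real.sqrt a' := by rw [hquarter]; exact Real.sqrt_le_sqrt ha'14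
    have hann : (0:ℝ) ≤ a := by linarith
    have ha'nn : (0:ℝ) ≤ a' := by linarith
    have hsqd : |Real.sqrt a - Real.sqrt a'| ≤ 2*δ^2 * |t - t'| := by
      have hprod : (Real.sqrt a - Real.sqrt a') * (Real.sqrt a + Real.sqrt a') = a - a' := by
        have h1 := Real.sq_sqrt hann
        have h2 := Real.sq_sqrt ha'nn
        nlinarith [h1, h2]
      have hden : (1:ℝ) ≤ Real.sqrt a + Real.sqrt a' := by linarith
      have haa' : |a - a'| ≤ 2*δ^2 * |t - t'| := by
        have hdiff : a - a' = δ^2 * ((t+t')*(t-t')) := by rw [hadef, ha'def]; ring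
        rw [hdiff, abs_mul, abs_mul, abs_of_nonneg (sq_nonneg δ)]
        have htt : |t + t'| ≤ 2 := by
          rw [abs_le]; constructor <;> nlinarith
        calc δ^2 * (|t+t'| * |t-t'|) ≤ δ^2 * (2 * |t-t'|) := by
              apply mul_le_mul_of_nonneg_left _ (sq_nonneg δ)
              exact mul_le_mul_of_nonneg_right htt (abs_nonneg _)
          _ = 2*δ^2*|t-t'| := by ring
      calc |Real.sqrt a - Real.sqrt a'|
          = |Real.sqrt a - Real.sqrt a'| * 1 := (mul_one _).symm
        _ ≤ |Real.sqrt a - Real.sqrt a'| * (Real.sqrt a + Real.sqrt a') := by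
            apply mul_le_mul_of_nonneg_left hden (abs_nonneg _)
        _ = |(Real.sqrt a - Real.sqrt a') * (Real.sqrt a + Real.sqrt a')| := by
            rw [abs_mul, abs_of_nonneg (by positivity : (0:ℝ) ≤ Real.sqrt a + Real.sqrt a')]
        _ = |a - a'| := by rw [hprod]
        _ ≤ 2*δ^2 * |t - t'| := haa'
    -- coefficient bounds
    have hsa1 : Real.sqrt a ≤ 1 := by
      rw [show (1:ℝ) = Real.sqrt 1 by rw [Real.sqrt_one]]
      apply Real.sqrt_le_sqrt
      rw [hadef]
      have ht2 : t^2 ≤ 1 := by nlinarith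
      have hmul : δ^2*t^2 ≤ δ^2*1 := mul_le_mul_of_nonneg_left ht2 (sq_nonneg δ)
      linarith
    have hrc_le : δ * t + Real.sqrt a ≤ 1 + δ := by
      have h5 : δ * t ≤ δ * 1 := mul_le_mul_of_nonneg_left ht1 hδ0.le
      rw [mul_one] at h5
      linarith
    have hrc_nn : 0 ≤ δ * t + Real.sqrt a := by positivity
    have hrcd : |(δ * t + Real.sqrt a) - (δ * t' + Real.sqrt a')| ≤ 2*δ * |t - t'| := by
      have h1 : (δ * t + Real.sqrt a) - (δ * t' + Real.sqrt a')
          = δ*(t - t') + (Real.sqrt a - Real.sqrt a') := by ring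
      calc |(δ * t + Real.sqrt a) - (δ * t' + Real.sqrt a')|
          ≤ |δ*(t-t')| + |Real.sqrt a - Real.sqrt a'| := by
            rw [h1]; exact abs_add_le _ _
        _ ≤ δ*|t-t'| + 2*δ^2*|t-t'| := by
            rw [abs_mul, abs_of_pos hδ0]; linarith [hsqd]
        _ ≤ 2*δ*|t-t'| := by
            have hdd : 2*δ^2 ≤ δ := by nlinarith
            have := mul_le_mul_of_nonneg_right hdd (abs_nonneg (t-t'))
            linarith
    -- assemble
    have hgv : g v - g v' = (δ * t + Real.sqrt a) • (v - v')
        + ((δ * t + Real.sqrt a) - (δ * t' + Real.sqrt a')) • v' := by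
      rw [hg]
      show ((δ * t + Real.sqrt a) • v - δ • u) - ((δ * t' + Real.sqrt a') • v' - δ • u) = _
      rw [smul_sub, sub_smul]
      abel
    rw [dist_eq_norm, dist_eq_norm, hgv]
    have hb : ‖(δ * t + Real.sqrt a) • (v - v')
        + ((δ * t + Real.sqrt a) - (δ * t' + Real.sqrt a')) • v'‖ ≤ (1+3*δ) * ‖v - v'‖ := by
      have e1 : ‖(δ * t + Real.sqrt a) • (v - v')‖ = (δ * t + Real.sqrt a) * ‖v - v'‖ := by
        rw [norm_smul, Real.norm_eq_abs, abs_of_nonneg hrc_nn]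
      have e2 : ‖((δ * t + Real.sqrt a) - (δ * t' + Real.sqrt a')) • v'‖
          = |(δ * t + Real.sqrt a) - (δ * t' + Real.sqrt a')| := by
        rw [norm_smul, Real.norm_eq_abs, hv'1, mul_one]
      have e3 : (δ * t + Real.sqrt a) * ‖v - v'‖ ≤ (1+δ) * ‖v - v'‖ :=
        mul_le_mul_of_nonneg_right hrc_le (norm_nonneg _)
      have e4 : 2*δ*|t - t'| ≤ 2*δ*‖v - v'‖ :=
        mul_le_mul_of_nonneg_left htd' (by linarith)
      calc ‖(δ * t + Real.sqrt a) • (v - v')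
          + ((δ * t + Real.sqrt a) - (δ * t' + Real.sqrt a')) • v'‖
          ≤ ‖(δ * t + Real.sqrt a) • (v - v')‖
            + ‖((δ * t + Real.sqrt a) - (δ * t' + Real.sqrt a')) • v'‖ := norm_add_le _ _
        _ ≤ (1+δ) * ‖v - v'‖ + 2*δ*|t - t'| := by rw [e1, e2]; linarith [hrcd]
        _ ≤ (1+δ) * ‖v - v'‖ + 2*δ*‖v - v'‖ := by linarith [e4]
        _ = (1+3*δ) * ‖v - v'‖ := by ring
    calc ‖(δ * t + Real.sqrt a) • (v - v')
        + ((δ * t + Real.sqrt a) - (δ * t' + Real.sqrt a')) • v'‖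
        ≤ (1+3*δ) * ‖v - v'‖ := hb
      _ = ↑(Real.toNNReal (1+3*δ)) * ‖v - v'‖ := by
          rw [Real.coe_toNNReal _ (by linarith : (0:ℝ) ≤ 1+3*δ)]
  -- ψ maps Cp into P and into the Lipschitz domain
  have hψ_maps : ∀ w ∈ Cp, ψ w ∈ P ∧ (‖ψ w‖ = 1 ∧ 0 ≤ ⟪u, ψ w⟫) := by
    rintro w ⟨⟨hw1, hw2⟩, hw3⟩
    simp only [Set.mem_setOf_eq] at hw3
    set ρ : ℝ := ‖w + δ • u‖ with hρdef
    have hρ1 : 1 ≤ ρ := hρ_ge w hw1 hw3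
    have hρpos : (0:ℝ) < ρ := lt_of_lt_of_le one_pos hρ1
    have hψnorm : ‖ψ w‖ = 1 := by
      rw [hψ]
      show ‖(ρ⁻¹ : ℝ) • (w + δ • u)‖ = 1
      rw [norm_smul, Real.norm_eq_abs, abs_inv, abs_of_pos hρpos]
      exact inv_mul_cancel₀ (ne_of_gt hρpos)
    have hψinner : ⟪u, ψ w⟫ = ρ⁻¹ * (⟪u, w⟫ + δ) := hinner_ψ w
    have hinner_ge : δ/(1+δ) ≤ ⟪u, ψ w⟫ := by
      rw [hψinner, inv_mul_eq_div]
      apply div_le_div₀ (by linarith) (by linarith) hρpos (hρ_le w hw1)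
    have hcone : ∀ x ∈ F, ⟪ψ w, x - y⟫ ≤ 0 := by
      intro x hx
      rw [hψ]
      show ⟪(ρ⁻¹:ℝ) • (w + δ • u), x - y⟫ ≤ 0
      rw [real_inner_smul_left, inner_add_left, real_inner_smul_left]
      have h1 := hw2 x hx
      have h2 := hcu x hx
      have : ⟪w, x-y⟫ + δ * ⟪u, x-y⟫ ≤ 0 := by nlinarith
      have hρinv : (0:ℝ) ≤ ρ⁻¹ := le_of_lt (inv_pos.mpr hρpos)
      exact mul_nonpos_of_nonneg_of_nonpos hρinv this
    exact ⟨⟨hψnorm, hcone, hinner_ge⟩, hψnorm, le_trans (by positivity) hinner_ge⟩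
  -- reflection maps Cm into Cp
  have hr_maps : ∀ v ∈ Cm, rf v ∈ Cp := by
    rintro v ⟨⟨hv1, hv2⟩, hv3⟩
    simp only [Set.mem_setOf_eq] at hv3
    have hrnorm : ‖rf v‖ = 1 := by
      have h0 : rf 0 = 0 := by
        rw [hrf]; show (0:E') - (2 * ⟪u, (0:E')⟫) • u = 0
        rw [inner_zero_right]; simp
      have := (isometry_reflect u hu).dist_eq v 0
      rw [dist_eq_norm, dist_eq_norm, sub_zero] at this
      calc ‖rf v‖ = ‖rf v - rf 0‖ := by rw [h0, sub_zero]
        _ = ‖v‖ := by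
            rw [hrf]
            show ‖(v - (2 * ⟪u, v⟫) • u) - ((0:E') - (2 * ⟪u, (0:E')⟫) • u)‖ = ‖v‖
            rw [inner_zero_right]; simpa using this
        _ = 1 := hv1
    have hrinner : ⟪u, rf v⟫ = -⟪u, v⟫ := by
      rw [hrf]
      show ⟪u, v - (2 * ⟪u, v⟫) • u⟫ = -⟪u, v⟫
      rw [inner_sub_right, real_inner_smul_right, huu]
      ring
    have hrcone : ∀ x ∈ F, ⟪rf v, x - y⟫ ≤ 0 := by
      intro x hx
      rw [hrf]
      show ⟪v - (2 * ⟪u, v⟫) • u, x - y⟫ ≤ 0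
      rw [inner_sub_left, real_inner_smul_left]
      have h1 := hv2 x hx
      have h2 := hcu x hx
      nlinarith
    exact ⟨⟨hrnorm, hrcone⟩, by rw [Set.mem_setOf_eq, hrinner]; linarith⟩
  -- measure estimates
  have hcore : ∀ A : Set E', A ⊆ Cp →
      μH[(n:ℝ)] A ≤ (Real.toNNReal (1+3*δ) : ℝ≥0∞) ^ (n:ℝ) * μH[(n:ℝ)] P := by
    intro A hA
    have h1 : A ⊆ g '' (ψ '' A) := by
      intro w hw
      obtain ⟨⟨hw1, _⟩, hw3⟩ := hA hw
      simp only [Set.mem_setOf_eq] at hw3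
      exact ⟨ψ w, Set.mem_image_of_mem ψ hw, hg_ψ w hw1 hw3⟩
    have h2 : ψ '' A ⊆ {v : E' | ‖v‖ = 1 ∧ 0 ≤ ⟪u, v⟫} := by
      rintro v ⟨w, hw, rfl⟩
      exact (hψ_maps w (hA hw)).2
    have h3 : ψ '' A ⊆ P := by
      rintro v ⟨w, hw, rfl⟩
      exact (hψ_maps w (hA hw)).1
    calc μH[(n:ℝ)] A ≤ μH[(n:ℝ)] (g '' (ψ '' A)) := measure_mono h1
      _ ≤ (Real.toNNReal (1+3*δ) : ℝ≥0∞) ^ (n:ℝ) * μH[(n:ℝ)] (ψ '' A) :=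
          (hg_lip.mono h2).hausdorffMeasure_image_le (by positivity)
      _ ≤ _ * μH[(n:ℝ)] P := by
          apply mul_le_mul_right (measure_mono h3)
  have hCsplit : C ⊆ Cp ∪ Cm := by
    intro v hv
    rcases le_total 0 ⟪u, v⟫ with h | h
    · exact Or.inl ⟨hv, h⟩
    · exact Or.inr ⟨hv, h⟩
  have hCm_bound : μH[(n:ℝ)] Cm ≤ (Real.toNNReal (1+3*δ) : ℝ≥0∞) ^ (n:ℝ) * μH[(n:ℝ)] P := by
    have h1 : μH[(n:ℝ)] Cm = μH[(n:ℝ)] (rf '' Cm) :=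
      ((isometry_reflect u hu).hausdorffMeasure_image (Or.inl (by positivity)) Cm).symm
    rw [h1]
    apply hcore
    rintro v ⟨w, hw, rfl⟩
    exact hr_maps w hw
  calc μH[(n:ℝ)] C ≤ μH[(n:ℝ)] (Cp ∪ Cm) := measure_mono hCsplit
    _ ≤ μH[(n:ℝ)] Cp + μH[(n:ℝ)] Cm := measure_union_le _ _
    _ ≤ (Real.toNNReal (1+3*δ) : ℝ≥0∞) ^ (n:ℝ) * μH[(n:ℝ)] P
        + (Real.toNNReal (1+3*δ) : ℝ≥0∞) ^ (n:ℝ) * μH[(n:ℝ)] P :=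
        add_le_add (hcore Cp (fun _ h => h)) hCm_bound
    _ = 2 * ((Real.toNNReal (1+3*δ) : ℝ≥0∞) ^ (n:ℝ)) * μH[(n:ℝ)] P := by ring

end cone


section assembly

variable {n : ℕ}

local notation "E'" => EuclideanSpace ℝ (Fin (n+1))

/-- The P-set for a finite stage. -/
def Pset (σ : EuclideanSpace ℝ (Fin (n+1)) → EuclideanSpace ℝ (Fin (n+1))) (δ : ℝ)
    (F : Finset (EuclideanSpace ℝ (Fin (n+1)))) (y : EuclideanSpace ℝ (Fin (n+1))) :
    Set (EuclideanSpace ℝ (Fin (n+1))) :=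
  {ν | ‖ν‖ = 1 ∧ (∀ x ∈ F, ⟪ν, x - y⟫ ≤ 0) ∧ δ/(1+δ) ≤ ⟪σ y, ν⟫}

lemma Pset_closed (σ : E' → E') (δ : ℝ) (F : Finset E') (y : E') :
    IsClosed (Pset σ δ F y) := by
  have h1 : Pset σ δ F y = {ν : E' | ‖ν‖ = 1} ∩
      ((⋂ x ∈ F, {ν : E' | ⟪ν, x - y⟫ ≤ 0}) ∩ {ν : E' | δ/(1+δ) ≤ ⟪σ y, ν⟫}) := by
    ext ν
    simp only [Pset, Set.mem_setOf_eq, Set.mem_inter_iff, Set.mem_iInter]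
  rw [h1]
  apply IsClosed.inter (isClosed_eq continuous_norm continuous_const)
  apply IsClosed.inter
  · exact isClosed_biInter (fun x _ => isClosed_le
      (Continuous.inner continuous_id continuous_const) continuous_const)
  · exact isClosed_le continuous_const (Continuous.inner continuous_const continuous_id)

lemma finite_stage (X : Set E')
    (σ : E' → E') (hσ : ∀ y ∈ X, ‖σ y‖ = 1 ∧ ∀ x ∈ X, ⟪σ y, x - y⟫ ≤ 0)
    (F : Finset E') (hF : F.Nonempty) (hFX : ↑F ⊆ X)
    (δ : ℝ) (hδ0 : 0 < δ) (hδ1 : δ ≤ 1/2) :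
    μH[(n:ℝ)] (Metric.sphere (0:E') 1)
      ≤ 2 * ((Real.toNNReal (1+3*δ) : ℝ≥0∞) ^ (n:ℝ))
        * μH[(n:ℝ)] (⋃ y ∈ F, Pset σ δ F y) := by
  classical
  have hcover : Metric.sphere (0:E') 1 ⊆
      ⋃ y ∈ F, {ν : E' | ‖ν‖ = 1 ∧ ∀ x ∈ F, ⟪ν, x - y⟫ ≤ 0} := by
    intro ν hν
    have hν1 : ‖ν‖ = 1 := by rwa [Metric.mem_sphere, dist_zero_right] at hν
    obtain ⟨y, hy, hmax⟩ := Finset.exists_max_image F (fun x => ⟪ν, x⟫) hF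
    refine Set.mem_biUnion hy ⟨hν1, fun x hx => ?_⟩
    rw [inner_sub_right]
    have := hmax x hx
    simpa using this
  have hdisj : (↑F : Set E').Pairwise (Function.onFun (AEDisjoint μH[(n:ℝ)]) (Pset σ δ F)) := by
    intro y hy y' hy' hne
    refine measure_mono_null ?_ (hyperplane_section_null n (y - y') (sub_ne_zero.mpr hne))
    rintro ν ⟨⟨h1, h2, -⟩, ⟨-, h2', -⟩⟩
    refine ⟨h1, ?_⟩
    have ha := h2 y' (by exact_mod_cast hy')
    have hb := h2' y (by exact_mod_cast hy)
    rw [inner_sub_right] at ha hb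
    rw [real_inner_comm, inner_sub_right]
    linarith
  have hmeas : ∀ y ∈ F, NullMeasurableSet (Pset σ δ F y) μH[(n:ℝ)] :=
    fun y _ => (Pset_closed σ δ F y).measurableSet.nullMeasurableSet
  calc μH[(n:ℝ)] (Metric.sphere (0:E') 1)
      ≤ μH[(n:ℝ)] (⋃ y ∈ F, {ν : E' | ‖ν‖ = 1 ∧ ∀ x ∈ F, ⟪ν, x - y⟫ ≤ 0}) :=
        measure_mono hcover
    _ ≤ ∑ y ∈ F, μH[(n:ℝ)] {ν : E' | ‖ν‖ = 1 ∧ ∀ x ∈ F, ⟪ν, x - y⟫ ≤ 0} :=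
        measure_biUnion_finset_le F _
    _ ≤ ∑ y ∈ F, 2 * ((Real.toNNReal (1+3*δ) : ℝ≥0∞) ^ (n:ℝ)) * μH[(n:ℝ)] (Pset σ δ F y) := by
        apply Finset.sum_le_sum
        intro y hy
        have h1 := (hσ y (hFX hy)).1
        have h2 : ∀ x ∈ F, ⟪σ y, x - y⟫ ≤ 0 := fun x hx => (hσ y (hFX hy)).2 x (hFX hx)
        exact cone_measure_le (σ y) h1 F y h2 δ hδ0 hδ1
    _ = 2 * ((Real.toNNReal (1+3*δ) : ℝ≥0∞) ^ (n:ℝ)) * ∑ y ∈ F, μH[(n:ℝ)] (Pset σ δ F y) := by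
        rw [Finset.mul_sum]
    _ = 2 * ((Real.toNNReal (1+3*δ) : ℝ≥0∞) ^ (n:ℝ))
        * μH[(n:ℝ)] (⋃ y ∈ F, Pset σ δ F y) := by
        rw [measure_biUnion_finset₀ hdisj hmeas]

end assembly


set_option maxHeartbeats 1000000 in
/-- Let `X ⊂ ℝ^(n+1)` be a nonempty compact set and `σ` a continuous selection of unit
normals, `σ(y) ∈ N_y X`.  Then the restricted normal cone
`NX/σ = ⋃_{y∈X}{ν ∈ N_y X : σ(y)·ν > 0}` satisfies `Hⁿ(NX/σ) ≥ (1/2)·Hⁿ(Sⁿ)`. -/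
theorem stmt_11 (n : ℕ) (X : Set (EuclideanSpace ℝ (Fin (n+1))))
    (hne : X.Nonempty) (hcp : IsCompact X)
    (σ : EuclideanSpace ℝ (Fin (n+1)) → EuclideanSpace ℝ (Fin (n+1)))
    (hσc : ContinuousOn σ X)
    (hσ : ∀ y ∈ X, σ y ∈ Metric.sphere (0 : EuclideanSpace ℝ (Fin (n+1))) 1 ∧
      ∀ x ∈ X, (inner ℝ (σ y) (x - y) : ℝ) ≤ 0) :
    μH[(n : ℝ)] (Metric.sphere (0 : EuclideanSpace ℝ (Fin (n+1))) 1) / 2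
      ≤ μH[(n : ℝ)] (⋃ y ∈ X, {ν : EuclideanSpace ℝ (Fin (n+1)) |
          ν ∈ Metric.sphere (0 : EuclideanSpace ℝ (Fin (n+1))) 1 ∧
          (∀ x ∈ X, (inner ℝ ν (x - y) : ℝ) ≤ 0) ∧
          0 < (inner ℝ (σ y) ν : ℝ)}) := by
  classical
  set T : Set (EuclideanSpace ℝ (Fin (n+1))) :=
    ⋃ y ∈ X, {ν : EuclideanSpace ℝ (Fin (n+1)) |
          ν ∈ Metric.sphere (0 : EuclideanSpace ℝ (Fin (n+1))) 1 ∧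
          (∀ x ∈ X, (inner ℝ ν (x - y) : ℝ) ≤ 0) ∧
          0 < (inner ℝ (σ y) ν : ℝ)} with hT
  set S : Set (EuclideanSpace ℝ (Fin (n+1))) :=
    Metric.sphere (0 : EuclideanSpace ℝ (Fin (n+1))) 1 with hS
  have hσ' : ∀ y ∈ X, ‖σ y‖ = 1 ∧ ∀ x ∈ X, ⟪σ y, x - y⟫ ≤ 0 := by
    intro y hy
    refine ⟨?_, (hσ y hy).2⟩
    have := (hσ y hy).1
    rwa [Metric.mem_sphere, dist_zero_right] at this
  -- countable dense subset of X via a sequence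
  have : Nonempty X := hne.to_subtype
  obtain ⟨D, hDc, hDd⟩ := TopologicalSpace.exists_countable_dense X
  set c : Set (EuclideanSpace ℝ (Fin (n+1))) := Subtype.val '' D with hc
  have hcc : c.Countable := hDc.image _
  have hcX : c ⊆ X := by rintro x ⟨⟨x', hx'⟩, -, rfl⟩; exact hx'
  have hcne : c.Nonempty := (hDd.nonempty).image _
  have hXcl : X ⊆ closure c := by
    intro x hx
    have h1 : (⟨x, hx⟩ : X) ∈ closure D := by
      rw [hDd.closure_eq]; trivial
    have h2 : x ∈ Subtype.val '' closure D := ⟨⟨x, hx⟩, h1, rfl⟩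
    exact (image_closure_subset_closure_image continuous_subtype_val) h2
  obtain ⟨f, hf⟩ := Set.Countable.exists_eq_range hcc hcne
  have hfX : ∀ i, f i ∈ X := by
    intro i
    apply hcX
    rw [hf]
    exact ⟨i, rfl⟩
  set Fk : ℕ → Finset (EuclideanSpace ℝ (Fin (n+1))) :=
    fun k => (Finset.range (k+1)).image f with hFk
  have hFkne : ∀ k, (Fk k).Nonempty := fun k =>
    ⟨f 0, Finset.mem_image.mpr ⟨0, Finset.mem_range.mpr (Nat.succ_pos k), rfl⟩⟩
  have hFkX : ∀ k, ↑(Fk k) ⊆ X := by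
    intro k x hx
    obtain ⟨i, -, rfl⟩ := Finset.mem_image.mp hx
    exact hfX i
  have hmemFk : ∀ i k, i ≤ k → f i ∈ Fk k := fun i k hik =>
    Finset.mem_image.mpr ⟨i, Finset.mem_range.mpr (Nat.lt_succ_of_le hik), rfl⟩
  -- main inequality for every admissible δ
  have key : ∀ δ : ℝ, 0 < δ → δ ≤ 1/2 →
      μH[(n:ℝ)] S ≤ 2 * ((Real.toNNReal (1+3*δ) : ℝ≥0∞) ^ (n:ℝ)) * μH[(n:ℝ)] T := by
    intro δ hδ0 hδ1
    set A : ℕ → Set (EuclideanSpace ℝ (Fin (n+1))) :=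
      fun k => ⋃ y ∈ Fk k, Pset σ δ (Fk k) y with hA
    have hAk : ∀ k, μH[(n:ℝ)] S ≤ 2 * ((Real.toNNReal (1+3*δ) : ℝ≥0∞) ^ (n:ℝ))
        * μH[(n:ℝ)] (A k) := fun k =>
      finite_stage X σ hσ' (Fk k) (hFkne k) (hFkX k) δ hδ0 hδ1
    have hAsub : ∀ k, A k ⊆ S := by
      intro k ν hν
      obtain ⟨y, -, hy2⟩ := Set.mem_iUnion₂.mp hν
      rw [hS, Metric.mem_sphere, dist_zero_right]
      exact hy2.1
    have hAclosed : ∀ k, IsClosed (A k) := by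
      intro k
      have : A k = ⋃ y ∈ Fk k, Pset σ δ (Fk k) y := rfl
      rw [this]
      exact Set.Finite.isClosed_biUnion (Fk k).finite_toSet (fun y _ => Pset_closed σ δ (Fk k) y)
    set G : ℕ → Set (EuclideanSpace ℝ (Fin (n+1))) := fun m => ⋃ i, A (m + i) with hG
    have hGanti : Antitone G := by
      intro m m' hmm
      intro x hx
      obtain ⟨i, hi⟩ := Set.mem_iUnion.mp hx
      exact Set.mem_iUnion.mpr ⟨(m' - m) + i, by rwa [show m + ((m' - m) + i) = m' + i by omega]⟩
    have hGmeas : ∀ m, NullMeasurableSet (G m) μH[(n:ℝ)] := by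
      intro m
      exact (MeasurableSet.iUnion (fun i =>
        (hAclosed (m + i)).measurableSet)).nullMeasurableSet
    have hGfin : μH[(n:ℝ)] (G 0) ≠ ⊤ := by
      refine ne_of_lt (lt_of_le_of_lt (measure_mono ?_) (sphere_hausdorff_lt_top n))
      intro x hx
      obtain ⟨i, hi⟩ := Set.mem_iUnion.mp hx
      exact hAsub _ hi
    have htend : Tendsto (fun m => μH[(n:ℝ)] (G m)) atTop (𝓝 (μH[(n:ℝ)] (⋂ m, G m))) :=
      tendsto_measure_iInter_atTop hGmeas hGanti ⟨0, hGfin⟩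
    have hGlb : ∀ m, μH[(n:ℝ)] S ≤ 2 * ((Real.toNNReal (1+3*δ) : ℝ≥0∞) ^ (n:ℝ))
        * μH[(n:ℝ)] (G m) := by
      intro m
      refine le_trans (hAk m) (mul_le_mul_right (measure_mono ?_) _)
      intro x hx
      exact Set.mem_iUnion.mpr ⟨0, by simpa using hx⟩
    have hIlb : μH[(n:ℝ)] S ≤ 2 * ((Real.toNNReal (1+3*δ) : ℝ≥0∞) ^ (n:ℝ))
        * μH[(n:ℝ)] (⋂ m, G m) := by
      have h2 : Tendsto (fun m => 2 * ((Real.toNNReal (1+3*δ) : ℝ≥0∞) ^ (n:ℝ))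
          * μH[(n:ℝ)] (G m)) atTop
          (𝓝 (2 * ((Real.toNNReal (1+3*δ) : ℝ≥0∞) ^ (n:ℝ)) * μH[(n:ℝ)] (⋂ m, G m))) := by
        apply ENNReal.Tendsto.const_mul htend
        right
        apply ENNReal.mul_ne_top (by norm_num)
        exact ne_of_lt (ENNReal.rpow_lt_top_of_nonneg (by positivity) (by simp))
      exact ge_of_tendsto' h2 hGlb
    -- the intersection is contained in T
    have hsub : (⋂ m, G m) ⊆ T := by
      intro ν hν
      have hν_all : ∀ m, ∃ k, m ≤ k ∧ ν ∈ A k := by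
        intro m
        have := Set.mem_iInter.mp hν m
        obtain ⟨i, hi⟩ := Set.mem_iUnion.mp this
        exact ⟨m + i, Nat.le_add_right m i, hi⟩
      choose k hk hkA using hν_all
      have hy_ex : ∀ m, ∃ y, y ∈ Fk (k m) ∧ ν ∈ Pset σ δ (Fk (k m)) y := by
        intro m
        obtain ⟨y, hy1, hy2⟩ := Set.mem_iUnion₂.mp (hkA m)
        exact ⟨y, hy1, hy2⟩
      choose y hyF hyP using hy_ex
      have hyX : ∀ m, y m ∈ X := fun m => hFkX (k m) (hyF m)
      obtain ⟨z, hzX, φ, hφ, hconv⟩ := hcp.tendsto_subseq hyX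
      have hν1 : ‖ν‖ = 1 := (hyP 0).1
      -- cone condition at z against all of X
      have hcone_c : ∀ i : ℕ, ⟪ν, f i - z⟫ ≤ 0 := by
        intro i
        have hev : ∀ᶠ m in atTop, ⟪ν, f i - y (φ m)⟫ ≤ 0 := by
          filter_upwards [eventually_ge_atTop i] with m him
          have h1 : i ≤ k (φ m) := le_trans him (le_trans (hφ.le_apply) (hk (φ m)))
          exact (hyP (φ m)).2.1 (f i) (hmemFk i (k (φ m)) h1)
        have hlim : Tendsto (fun m => ⟪ν, f i - y (φ m)⟫) atTop (𝓝 ⟪ν, f i - z⟫) :=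
          Filter.Tendsto.inner tendsto_const_nhds (tendsto_const_nhds.sub hconv)
        exact le_of_tendsto hlim hev
      have hcone : ∀ x ∈ X, ⟪ν, x - z⟫ ≤ 0 := by
        intro x hx
        have hcl : closure c ⊆ {w : EuclideanSpace ℝ (Fin (n+1)) | ⟪ν, w - z⟫ ≤ 0} := by
          apply closure_minimal
          · intro w hw
            rw [hf] at hw
            obtain ⟨i, rfl⟩ := hw
            exact hcone_c i
          · exact isClosed_le (Continuous.inner continuous_const
              (continuous_id.sub continuous_const)) continuous_const
        exact hcl (hXcl hx)
      -- inner product with σ z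
      have hσz : δ/(1+δ) ≤ ⟪σ z, ν⟫ := by
        have h1 : Tendsto (fun m => y (φ m)) atTop (𝓝[X] z) := by
          rw [tendsto_nhdsWithin_iff]
          exact ⟨hconv, Filter.Eventually.of_forall (fun m => hyX (φ m))⟩
        have h2 : Tendsto (fun m => σ (y (φ m))) atTop (𝓝 (σ z)) :=
          (hσc z hzX).tendsto.comp h1
        have h3 : Tendsto (fun m => ⟪σ (y (φ m)), ν⟫) atTop (𝓝 ⟪σ z, ν⟫) :=
          Filter.Tendsto.inner h2 tendsto_const_nhds
        exact ge_of_tendsto' h3 (fun m => (hyP (φ m)).2.2)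
      refine Set.mem_biUnion hzX ?_
      refine ⟨?_, hcone, lt_of_lt_of_le (by positivity) hσz⟩
      rw [Metric.mem_sphere, dist_zero_right]; exact hν1
    exact le_trans hIlb (mul_le_mul_right (measure_mono hsub) _)
  -- pass to the limit δ → 0
  set δseq : ℕ → ℝ := fun m => 1/(2*((m:ℝ)+1)) with hδseq
  have hδ0 : ∀ m, 0 < δseq m := by intro m; positivity
  have hδhalf : ∀ m, δseq m ≤ 1/2 := by
    intro m
    rw [hδseq]
    rw [div_le_div_iff₀ (by positivity) (by norm_num)]
    nlinarith [Nat.cast_nonneg (α := ℝ) m]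
  have hδ_tendsto : Tendsto δseq atTop (𝓝 0) := by
    have h1 : Tendsto (fun m : ℕ => ((m:ℝ)+1)) atTop atTop :=
      tendsto_atTop_add_const_right atTop 1 tendsto_natCast_atTop_atTop
    have h2 : Tendsto (fun m : ℕ => (2*((m:ℝ)+1))) atTop atTop :=
      (tendsto_const_mul_atTop_of_pos (by norm_num)).mpr h1
    exact h2.inv_tendsto_atTop.congr (fun m => (one_div _).symm)
  have hKtendsto : Tendsto (fun m => 2 * ((Real.toNNReal (1+3*δseq m) : ℝ≥0∞) ^ (n:ℝ)))
      atTop (𝓝 2) := by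
    have h1 : Tendsto (fun m => (1+3*δseq m : ℝ)) atTop (𝓝 (1+3*0)) :=
      tendsto_const_nhds.add (hδ_tendsto.const_mul (3:ℝ))
    rw [show (1:ℝ)+3*0 = 1 by norm_num] at h1
    have h2 : Tendsto (fun m => Real.toNNReal (1+3*δseq m)) atTop (𝓝 1) := by
      have := continuous_real_toNNReal.continuousAt.tendsto.comp h1
      simpa [Real.toNNReal_one, Function.comp_def] using this
    have h3 : Tendsto (fun m => (Real.toNNReal (1+3*δseq m) : ℝ≥0∞)) atTop (𝓝 1) := by
      rw [show ((1:ℝ≥0∞)) = ((1:ℝ≥0) : ℝ≥0∞) by simp]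
      exact ENNReal.tendsto_coe.mpr h2
    have h4 : Tendsto (fun m => (Real.toNNReal (1+3*δseq m) : ℝ≥0∞) ^ (n:ℝ)) atTop (𝓝 1) := by
      have := (ENNReal.continuous_rpow_const (y := (n:ℝ))).continuousAt.tendsto.comp h3
      simpa [ENNReal.one_rpow, Function.comp_def] using this
    have h5 := ENNReal.Tendsto.const_mul (a := (2:ℝ≥0∞)) h4 (Or.inr (by norm_num))
    simpa using h5
  have hfinal : μH[(n:ℝ)] S ≤ 2 * μH[(n:ℝ)] T := by
    have h6 : Tendsto (fun m => 2 * ((Real.toNNReal (1+3*δseq m) : ℝ≥0∞) ^ (n:ℝ))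
        * μH[(n:ℝ)] T) atTop (𝓝 (2 * μH[(n:ℝ)] T)) :=
      ENNReal.Tendsto.mul_const hKtendsto (Or.inl (by norm_num))
    exact ge_of_tendsto' h6 (fun m => key (δseq m) (hδ0 m) (hδhalf m))
  rw [ENNReal.div_le_iff_le_mul (Or.inl (by norm_num)) (Or.inl (by norm_num))]
  rwa [mul_comm] at hfinal
end
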